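/- Let H be an atomic monoid with Δ(H) ≠ ∅. Then max Δ(H) ≤ max Δ̃(A(M_H)), i.e. the maximum of the set of distances of H is at most the maximal value ||x| − |y|| over atoms (x, y) of the monoid of relations with x ≠ y. -/

import Mathlib

open Multiset
open scoped Classical ENNReal

/-- The set of atoms (irreducible elements) of a reduced monoid `M`. -/
abbrev Atom (M : Type) [CancelCommMonoid M] : Type := {u : M // Irreducible u}

/-- The factorization homomorphism `π : Z(H) → H`, where the factorization monoid
`Z(H)` is realized as the free commutative monoid (multiset) over the atoms. -/
def fprod {M : Type} [CancelCommMonoid M] (z : Multiset (Atom M)) : M :=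
  (z.map Subtype.val).prod

/-- The set of factorizations `Z(a)` of `a`. -/
def Zf {M : Type} [CancelCommMonoid M] (a : M) : Set (Multiset (Atom M)) :=
  {z | fprod z = a}

/-- `M` is reduced: the only unit is `1`. -/
def Reduced (M : Type) [CancelCommMonoid M] : Prop := ∀ u : M, IsUnit u → u = 1

/-- `M` is atomic: every non-unit is a product of atoms. -/
def Atomic (M : Type) [CancelCommMonoid M] : Prop :=
  ∀ a : M, ¬ IsUnit a → ∃ z : Multiset (Atom M), fprod z = a

/-- The distance between two factorizations. -/
noncomputable def fdist {M : Type} [CancelCommMonoid M] (z z' : Multiset (Atom M)) : ℕ :=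
  max (card (z - z')) (card (z' - z))

/-- The catenary degree `c(a)`: the least `N` such that any two factorizations of `a`
can be concatenated by an `N`-chain of factorizations of `a`. -/
noncomputable def cat {M : Type} [CancelCommMonoid M] (a : M) : ℕ∞ :=
  sInf {N : ℕ∞ | ∀ z ∈ Zf a, ∀ z' ∈ Zf a,
    Relation.ReflTransGen (fun u v => v ∈ Zf a ∧ (fdist u v : ℕ∞) ≤ N) z z'}

/-- The catenary degree `c(H)`. -/
noncomputable def catH (M : Type) [CancelCommMonoid M] : ℕ∞ := ⨆ a : M, cat a

/-- The `R`-relation on factorizations of `a`: two factorizations are `R`-related if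
they can be joined by a chain of factorizations of `a` whose consecutive members have a
common atom (the degenerate case `z = z' = 1` is the reflexivity case). -/
def RRel {M : Type} [CancelCommMonoid M] (a : M) :
    Multiset (Atom M) → Multiset (Atom M) → Prop :=
  Relation.ReflTransGen (fun u v => u ∈ Zf a ∧ v ∈ Zf a ∧ u ∩ v ≠ 0)

/-- `|R_a| ≥ 2`: `a` has at least two `R`-equivalence classes of factorizations. -/
def TwoClasses {M : Type} [CancelCommMonoid M] (a : M) : Prop :=
  ∃ z ∈ Zf a, ∃ z' ∈ Zf a, ¬ RRel a z z'

/-- `μ(a)`: the supremum over the `R`-classes `ρ` of `Z(a)` of `min {|z| : z ∈ ρ}`. -/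
noncomputable def mu {M : Type} [CancelCommMonoid M] (a : M) : ℕ∞ :=
  ⨆ z ∈ Zf a, ⨅ w ∈ {w | w ∈ Zf a ∧ RRel a z w}, (card w : ℕ∞)

/-- `μ(H) = sup {μ(a) : a ∈ H, |R_a| ≥ 2}`. -/
noncomputable def muH (M : Type) [CancelCommMonoid M] : ℕ∞ :=
  ⨆ a : M, ⨆ (_ : TwoClasses a), mu a

/-- The monoid of relations `M_H ⊆ Z(H) × Z(H)`. -/
def MHset (M : Type) [CancelCommMonoid M] :
    Set (Multiset (Atom M) × Multiset (Atom M)) :=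
  {p | fprod p.1 = fprod p.2}

/-- Atoms of the (reduced) monoid of relations `M_H`. -/
def IsRelAtom {M : Type} [CancelCommMonoid M]
    (p : Multiset (Atom M) × Multiset (Atom M)) : Prop :=
  p ∈ MHset M ∧ p ≠ 0 ∧
    ∀ q r, q ∈ MHset M → r ∈ MHset M → p = q + r → q = 0 ∨ r = 0

/-- The set of lengths `L(a)`. -/
def Lset {M : Type} [CancelCommMonoid M] (a : M) : Set ℕ := {n | ∃ z ∈ Zf a, card z = n}

/-- The set of distances `Δ(H)`: positive integers `d` such that some length set `L(a)`
contains consecutive elements `l, l + d`. -/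
def DeltaH (M : Type) [CancelCommMonoid M] : Set ℕ :=
  {d | 0 < d ∧ ∃ a : M, ∃ l, l ∈ Lset a ∧ Lset a ∩ Set.Icc l (l + d) = {l, l + d}}

/-- `Δ̃(X) = {||x| - |y|| : (x, y) ∈ X, x ≠ y}` for a subset `X ⊆ M_H`. -/
def Dtil {M : Type} [CancelCommMonoid M]
    (X : Set (Multiset (Atom M) × Multiset (Atom M))) : Set ℕ :=
  {d | ∃ p ∈ X, p.1 ≠ p.2 ∧ d = Nat.dist (card p.1) (card p.2)}


section Aux

variable {M : Type} [CancelCommMonoid M]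

lemma fprod_add (u v : Multiset (Atom M)) : fprod (u + v) = fprod u * fprod v := by
  simp [fprod]

lemma fprod_list_sum_eq (L : List (Multiset (Atom M) × Multiset (Atom M)))
    (h : ∀ q ∈ L, q ∈ MHset M) :
    fprod (L.map Prod.fst).sum = fprod (L.map Prod.snd).sum := by
  induction L with
  | nil => rfl
  | cons q L ih =>
    simp only [List.map_cons, List.sum_cons, fprod_add]
    rw [h q List.mem_cons_self, ih (fun r hr => h r (List.mem_cons_of_mem _ hr))]

lemma step_sum (L : List (Multiset (Atom M) × Multiset (Atom M))) :
    (L.map (fun q => (card q.2 : ℤ) - card q.1)).sum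
      = (card (L.map Prod.snd).sum : ℤ) - (card (L.map Prod.fst).sum : ℤ) := by
  induction L with
  | nil => simp
  | cons q L ih =>
    simp only [List.map_cons, List.sum_cons, Multiset.card_add, ih]
    push_cast
    ring

lemma exists_atom_list :
    ∀ (n : ℕ) (p : Multiset (Atom M) × Multiset (Atom M)),
      card p.1 + card p.2 ≤ n → p ∈ MHset M → p ≠ 0 →
      ∃ L : List (Multiset (Atom M) × Multiset (Atom M)),
        (∀ q ∈ L, IsRelAtom q) ∧ L.sum = p := by
  intro n
  induction n with
  | zero =>
    intro p hc _ hne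
    exfalso
    apply hne
    have h1 : card p.1 = 0 := by omega
    have h2 : card p.2 = 0 := by omega
    have e1 : p.1 = 0 := Multiset.card_eq_zero.mp h1
    have e2 : p.2 = 0 := Multiset.card_eq_zero.mp h2
    exact Prod.ext e1 e2
  | succ n ih =>
    intro p hc hmem hne
    by_cases hatom : ∀ q r, q ∈ MHset M → r ∈ MHset M → p = q + r → q = 0 ∨ r = 0
    · refine ⟨[p], ?_, by simp⟩
      intro q hq
      simp only [List.mem_singleton] at hq
      subst hq
      exact ⟨hmem, hne, hatom⟩
    · push_neg at hatom
      obtain ⟨q, r, hq, hr, hpqr, hq0, hr0⟩ := hatom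
      have h1 : p.1 = q.1 + r.1 := by rw [hpqr]; rfl
      have h2 : p.2 = q.2 + r.2 := by rw [hpqr]; rfl
      have hrpos : 0 < card r.1 + card r.2 := by
        rcases (not_and_or.mp (fun h => hr0 (Prod.ext h.1 h.2))) with h | h
        · have := Multiset.card_pos.mpr h; omega
        · have := Multiset.card_pos.mpr h; omega
      have hqpos : 0 < card q.1 + card q.2 := by
        rcases (not_and_or.mp (fun h => hq0 (Prod.ext h.1 h.2))) with h | h
        · have := Multiset.card_pos.mpr h; omega
        · have := Multiset.card_pos.mpr h; omega
      have hcc : card p.1 + card p.2 = (card q.1 + card q.2) + (card r.1 + card r.2) := by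
        rw [h1, h2, Multiset.card_add, Multiset.card_add]; ring
      obtain ⟨Lq, hLq, hLqs⟩ := ih q (by omega) hq hq0
      obtain ⟨Lr, hLr, hLrs⟩ := ih r (by omega) hr hr0
      refine ⟨Lq ++ Lr, ?_, by rw [List.sum_append, hLqs, hLrs, hpqr]⟩
      intro x hx
      rcases List.mem_append.mp hx with h | h
      · exact hLq x h
      · exact hLr x h

lemma jump (l d : ℤ) (hd : 0 < d) :
    ∀ (L : List ℤ) (s : ℤ), s ≤ l → l + d ≤ s + L.sum →
      (∀ L1 L2, L = L1 ++ L2 → s + L1.sum ≤ l ∨ l + d ≤ s + L1.sum) →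
      ∃ x ∈ L, d ≤ |x| := by
  intro L
  induction L with
  | nil =>
    intro s h1 h2 _
    simp only [List.sum_nil, add_zero] at h2
    omega
  | cons x L' ih =>
    intro s h1 h2 havoid
    rcases havoid [x] L' rfl with h | h
    · simp only [List.sum_cons, List.sum_nil, add_zero] at h
      obtain ⟨y, hy, hdy⟩ := ih (s + x) h
        (by simp only [List.sum_cons] at h2; omega)
        (by
          intro L1 L2 hL
          have := havoid (x :: L1) L2 (by rw [hL]; rfl)
          simpa [add_assoc] using this)
      exact ⟨y, List.mem_cons_of_mem _ hy, hdy⟩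
    · simp only [List.sum_cons, List.sum_nil, add_zero] at h
      refine ⟨x, List.mem_cons_self, ?_⟩
      have : d ≤ x := by omega
      exact this.trans (le_abs_self x)

lemma natdist_cast (a b : ℕ) : (Nat.dist a b : ℤ) = |(a : ℤ) - b| := by
  unfold Nat.dist
  rw [Int.abs_eq_natAbs]
  omega

lemma fst_list_sum {α β : Type*} [AddMonoid α] [AddMonoid β] (L : List (α × β)) :
    L.sum.1 = (L.map Prod.fst).sum := by
  induction L with
  | nil => rfl
  | cons x L ih => simp [Prod.fst_add, ih]

lemma snd_list_sum {α β : Type*} [AddMonoid α] [AddMonoid β] (L : List (α × β)) :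
    L.sum.2 = (L.map Prod.snd).sum := by
  induction L with
  | nil => rfl
  | cons x L ih => simp [Prod.snd_add, ih]

end Aux

/-- **Proposition 4.5.3 (second part).** If `Δ(H) ≠ ∅`, then
`max Δ(H) ≤ max Δ̃(A(M_H))`. -/
theorem max_DeltaH_le (M : Type) [CancelCommMonoid M]
    (hred : Reduced M) (hat : Atomic M) (hne : (DeltaH M).Nonempty) :
    (⨆ d ∈ DeltaH M, (d : ℕ∞)) ≤ ⨆ d ∈ Dtil {p : Multiset (Atom M) × Multiset (Atom M) | IsRelAtom p}, (d : ℕ∞) := by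
  refine iSup₂_le fun d hd => ?_
  obtain ⟨hd0, a, l, hl, hIcc⟩ := hd
  have hld : l + d ∈ Lset a ∩ Set.Icc l (l + d) := by
    rw [hIcc]; simp
  obtain ⟨z, hz, hzc⟩ := hl
  obtain ⟨z', hz', hz'c⟩ := hld.1
  have hpmem : (z, z') ∈ MHset M := by
    simp only [MHset, Set.mem_setOf_eq]
    rw [hz, hz']
  have hpne : (z, z') ≠ 0 := by
    intro h
    have : z' = 0 := congrArg Prod.snd h
    rw [this] at hz'c
    simp at hz'c
    omega
  obtain ⟨L, hLatom, hLsum⟩ := exists_atom_list (card z + card z') (z, z') le_rfl hpmem hpne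
  have hfst : (L.map Prod.fst).sum = z := by
    have := congrArg Prod.fst hLsum
    rwa [fst_list_sum] at this
  have hsnd : (L.map Prod.snd).sum = z' := by
    have := congrArg Prod.snd hLsum
    rwa [snd_list_sum] at this
  obtain ⟨x, hx, hdx⟩ := jump (l : ℤ) (d : ℤ) (by exact_mod_cast hd0)
      (L.map (fun q => (card q.2 : ℤ) - card q.1)) (l : ℤ) le_rfl
      (by
        rw [step_sum, hfst, hsnd, hzc, hz'c]
        push_cast
        omega)
      (by
        intro L1 L2 hL
        obtain ⟨A1, A2, hA, hA1, hA2⟩ := List.map_eq_append_iff.mp hL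
        set w : Multiset (Atom M) := (A1.map Prod.snd).sum + (A2.map Prod.fst).sum with hw
        have hwZ : fprod w = a := by
          rw [hw, fprod_add,
            ← fprod_list_sum_eq A1 (fun q hq => (hLatom q (by
              rw [hA]; exact List.mem_append_left _ hq)).1),
            ← fprod_add]
          have : (A1.map Prod.fst).sum + (A2.map Prod.fst).sum = z := by
            rw [← hfst, hA, List.map_append, List.sum_append]
          rw [this, hz]
        have e2 : l = card (A1.map Prod.fst).sum + card (A2.map Prod.fst).sum := by
          have : z = (A1.map Prod.fst).sum + (A2.map Prod.fst).sum := by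
            rw [← hfst, hA, List.map_append, List.sum_append]
          rw [← hzc, this, Multiset.card_add]
        have e3 : L1.sum = (card (A1.map Prod.snd).sum : ℤ) - card (A1.map Prod.fst).sum := by
          rw [← hA1, step_sum]
        have e4 : card w = card (A1.map Prod.snd).sum + card (A2.map Prod.fst).sum :=
          Multiset.card_add _ _
        have hdisj : card w ≤ l ∨ l + d ≤ card w := by
          by_contra hcon
          push_neg at hcon
          have hmem : card w ∈ Lset a ∩ Set.Icc l (l + d) :=
            ⟨⟨w, hwZ, rfl⟩, le_of_lt hcon.1, le_of_lt hcon.2⟩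
          rw [hIcc] at hmem
          simp only [Set.mem_insert_iff, Set.mem_singleton_iff] at hmem
          rcases hmem with h | h <;> omega
        rw [e3]
        push_cast
        omega)
  obtain ⟨q, hqL, hqx⟩ := List.mem_map.mp hx
  have hdn : d ≤ Nat.dist (card q.1) (card q.2) := by
    have : (d : ℤ) ≤ (Nat.dist (card q.1) (card q.2) : ℤ) := by
      rw [natdist_cast, abs_sub_comm, hqx]
      exact hdx
    exact_mod_cast this
  have hne12 : q.1 ≠ q.2 := by
    intro h
    rw [h, Nat.dist_self] at hdn
    omega
  have hmem : Nat.dist (card q.1) (card q.2)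
      ∈ Dtil {p : Multiset (Atom M) × Multiset (Atom M) | IsRelAtom p} :=
    ⟨q, hLatom q hqL, hne12, rfl⟩
  exact le_iSup₂_of_le _ hmem (by exact_mod_cast hdn)
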